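/- arXiv:1908.05446 — 8 statements merged into one kernel-verified Lean document; each statement's English description precedes it below -/
import Mathlib

section
/- Let M be a commutative additive monoid which is reduced and atomic, let G be an additive commutative group, and let ι : M →+ G be an additive monoid homomorphism such that the family (ι a)_{a ∈ Atom M}, indexed by the set of atoms of M, is linearly independent over ℤ (in particular ι is injective on Atom M). Then M is free on its set of atoms: the canonical additive map (Atom M →₀ ℕ) →+ M, sending a finitely supported function c to ∑_{a} c(a) • a, is bijective. -/
/-- A commutative additive monoid is *reduced* if `a + b = 0` implies `a = 0` and `b = 0`. -/
def MonoidReduced (M : Type*) [AddCommMonoid M] : Prop :=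
  ∀ a b : M, a + b = 0 → a = 0 ∧ b = 0

/-- The set of *atoms* of a commutative additive monoid: nonzero elements `x` such that
`x = y + z` implies `y = 0` or `z = 0`. -/
def Atom (M : Type*) [AddCommMonoid M] : Set M :=
  {x | x ≠ 0 ∧ ∀ y z : M, x = y + z → y = 0 ∨ z = 0}

/-- A commutative additive monoid is *atomic* if every element is the sum of a finite
multiset of atoms. -/
def MonoidAtomic (M : Type*) [AddCommMonoid M] : Prop :=
  ∀ x : M, ∃ s : Multiset M, (∀ a ∈ s, a ∈ Atom M) ∧ s.sum = x

/-- The canonical additive map `(A →₀ ℕ) →+ M`, sending a finitely supported function `c`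
to `∑ a, c a • a`. -/
noncomputable def freeOnMap (M : Type*) [AddCommMonoid M] (A : Set M) : (A →₀ ℕ) →+ M :=
  Finsupp.liftAddHom fun a => multiplesHom M (a : M)

/-- `M` is *free on `A`* if the canonical map `(A →₀ ℕ) →+ M` is bijective. -/
def IsFreeOn (M : Type*) [AddCommMonoid M] (A : Set M) : Prop :=
  Function.Bijective (freeOnMap M A)

/-- If `M` is a reduced atomic commutative monoid and `ι : M →+ G` is a homomorphism to an
abelian group such that the images of the atoms are linearly independent over `ℤ`, then `M`
is free on its set of atoms. -/
theorem free_of_linearIndependent_atoms (M : Type*) [AddCommMonoid M]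
    (G : Type*) [AddCommGroup G] (ι : M →+ G)
    (hred : MonoidReduced M) (hatomic : MonoidAtomic M)
    (hli : LinearIndependent ℤ (fun a : Atom M => ι (a : M))) :
    IsFreeOn M (Atom M) := by
  have key : ∀ c : Atom M →₀ ℕ,
      ι (freeOnMap M (Atom M) c) =
      Finsupp.linearCombination ℤ (fun a : Atom M => ι (a : M))
        (c.mapRange (Nat.cast) Nat.cast_zero) := by
    intro c
    rw [freeOnMap, Finsupp.liftAddHom_apply, Finsupp.linearCombination_apply,
      Finsupp.sum_mapRange_index (by simp)]
    rw [map_finsuppSum]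
    refine Finsupp.sum_congr fun a _ => ?_
    simp [natCast_zsmul]
  constructor
  · intro c c' h
    have : (c.mapRange (Nat.cast) Nat.cast_zero : Atom M →₀ ℤ) =
        c'.mapRange (Nat.cast) Nat.cast_zero := by
      apply hli
      rw [← key, ← key, h]
    ext a
    have := congrFun (congrArg (fun f : Atom M →₀ ℤ => (f : Atom M → ℤ)) this) a
    simpa using this
  · intro x
    obtain ⟨s, hs, rfl⟩ := hatomic x
    induction s using Multiset.induction with
    | empty => exact ⟨0, by simp⟩
    | cons a s ih =>
      obtain ⟨c, hc⟩ := ih (fun b hb => hs b (Multiset.mem_cons_of_mem hb))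
      refine ⟨Finsupp.single ⟨a, hs a (Multiset.mem_cons_self a s)⟩ 1 + c, ?_⟩
      rw [map_add, hc, Multiset.sum_cons]
      congr 1
      simp [freeOnMap]
end

section
/- Let M be a commutative additive monoid which is reduced and atomic with finitely many atoms, let G be an additive commutative group which is a free ℤ-module of finite rank, and let ι : M →+ G be an additive monoid homomorphism whose range generates G as a group (AddSubgroup.closure (Set.range ι) = ⊤). If the number of atoms of M equals the rank of G (Nat.card (Atom M) = finrank ℤ G), then M is free on its set of atoms: the canonical additive map (Atom M →₀ ℕ) →+ M, sending c to ∑_{a} c(a) • a, is bijective. -/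
/-- Let `M` be a reduced atomic commutative monoid with finitely many atoms and `ι : M →+ G`
a homomorphism to a free abelian group of finite rank whose range generates `G`. If the number
of atoms of `M` equals the rank of `G`, then `M` is free on its set of atoms. -/
theorem free_of_card_atoms_eq_finrank (M : Type*) [AddCommMonoid M]
    (G : Type*) [AddCommGroup G] [Module.Free ℤ G] [Module.Finite ℤ G] (ι : M →+ G)
    (hred : MonoidReduced M) (hatomic : MonoidAtomic M) (hfin : (Atom M).Finite)
    (hgen : AddSubgroup.closure (Set.range ι) = ⊤)
    (hcard : Nat.card (Atom M) = Module.finrank ℤ G) :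
    IsFreeOn M (Atom M) := by
  classical
  haveI : Fintype (Atom M) := hfin.fintype
  set v : Atom M → G := fun a => ι a with hv
  set f : (Atom M →₀ ℤ) →ₗ[ℤ] G := Finsupp.linearCombination ℤ v with hf
  -- the images of atoms span G
  have hmem : ∀ x : M, ι x ∈ Submodule.span ℤ (Set.range v) := by
    intro x
    obtain ⟨s, hs, rfl⟩ := hatomic x
    rw [map_multiset_sum]
    refine AddSubmonoid.multiset_sum_mem (Submodule.span ℤ (Set.range v)).toAddSubmonoid _ ?_
    intro g hg
    obtain ⟨a, ha, rfl⟩ := Multiset.mem_map.1 hg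
    exact Submodule.subset_span ⟨⟨a, hs a ha⟩, rfl⟩
  have hspan : Submodule.span ℤ (Set.range v) = ⊤ := by
    rw [eq_top_iff]
    intro g _
    have hg : g ∈ AddSubgroup.closure (Set.range ι) := by rw [hgen]; trivial
    refine (AddSubgroup.closure_le
      ((Submodule.span ℤ (Set.range v)).toAddSubgroup)).2 ?_ hg
    rintro _ ⟨x, rfl⟩
    exact hmem x
  have hfsurj : Function.Surjective f := by
    rw [← LinearMap.range_eq_top, hf, Finsupp.range_linearCombination, hspan]
  -- an equiv G ≃ₗ (Atom M →₀ ℤ)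
  let b := Module.Free.chooseBasis ℤ G
  have hcard' : Fintype.card (Module.Free.ChooseBasisIndex ℤ G) = Fintype.card (Atom M) := by
    rw [← Module.finrank_eq_card_chooseBasisIndex, ← hcard, Nat.card_eq_fintype_card]
  let e : G ≃ₗ[ℤ] (Atom M →₀ ℤ) :=
    b.equiv Finsupp.basisSingleOne (Fintype.equivOfCardEq hcard')
  have hfinj : Function.Injective f := by
    have hsurj2 : Function.Surjective (f ∘ₗ (e : G →ₗ[ℤ] (Atom M →₀ ℤ))) := by
      rw [LinearMap.coe_comp]; exact hfsurj.comp e.surjective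
    have hinj2 := OrzechProperty.injective_of_surjective_endomorphism _ hsurj2
    intro x y hxy
    have h2 := hinj2 (a₁ := e.symm x) (a₂ := e.symm y)
      (by simp [LinearMap.coe_comp, Function.comp, hxy])
    exact e.symm.injective h2
  -- key compatibility
  have hcompat : ∀ c : Atom M →₀ ℕ,
      ι (freeOnMap M (Atom M) c) = f (c.mapRange (Nat.cast : ℕ → ℤ) Nat.cast_zero) := by
    intro c
    rw [freeOnMap, Finsupp.liftAddHom_apply, map_finsuppSum]
    rw [hf, Finsupp.linearCombination_apply, Finsupp.sum_mapRange_index (by simp)]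
    refine Finsupp.sum_congr fun a _ => ?_
    simp [hv, natCast_zsmul]
  constructor
  · intro c c' hcc
    have : f (c.mapRange (Nat.cast : ℕ → ℤ) Nat.cast_zero)
        = f (c'.mapRange (Nat.cast : ℕ → ℤ) Nat.cast_zero) := by
      rw [← hcompat, ← hcompat, hcc]
    exact Finsupp.mapRange_injective _ _ Nat.cast_injective (hfinj this)
  · intro x
    obtain ⟨s, hs, rfl⟩ := hatomic x
    have : s.sum ∈ AddMonoidHom.mrange (freeOnMap M (Atom M)) := by
      refine AddSubmonoid.multiset_sum_mem _ _ fun a ha => ?_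
      refine ⟨Finsupp.single ⟨a, hs a ha⟩ 1, ?_⟩
      rw [freeOnMap, Finsupp.liftAddHom_apply, Finsupp.sum_single_index (by simp)]
      simp
    exact this
end

section
/- Let M be a commutative additive monoid. Then M is half-factorial (atomic, and any two expressions of the same element as a sum of a finite multiset of atoms have the same number of summands) if and only if M admits a length-like function ν : M →+ ℕ satisfying ν(a) = 1 for every atom a of M. -/
/-- A commutative additive monoid is *half-factorial* if it is atomic and any two finite
multisets of atoms with the same sum have the same cardinality. -/
def HalfFactorial (M : Type*) [AddCommMonoid M] : Prop :=
  MonoidAtomic M ∧ ∀ x : M, ∀ s t : Multiset M, (∀ a ∈ s, a ∈ Atom M) → (∀ a ∈ t, a ∈ Atom M) →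
    s.sum = x → t.sum = x → Multiset.card s = Multiset.card t

/-- A commutative additive monoid `M` is half-factorial if and only if it admits a length-like
function `ν : M →+ ℕ` (i.e. `ν x = 0 → x = 0`) with `ν a = 1` for every atom `a`. -/
theorem halfFactorial_iff_exists_lengthLike (M : Type*) [AddCommMonoid M] :
    HalfFactorial M ↔
      ∃ ν : M →+ ℕ, (∀ x : M, ν x = 0 → x = 0) ∧ ∀ a ∈ Atom M, ν a = 1 := by
  constructor
  · rintro ⟨hat, huniq⟩
    choose f hf hsum using hat
    have key : ∀ x (s : Multiset M), (∀ a ∈ s, a ∈ Atom M) → s.sum = x →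
        Multiset.card (f x) = Multiset.card s := fun x s hs hsx =>
      huniq x (f x) s (hf x) hs (hsum x) hsx
    refine ⟨{ toFun := fun x => Multiset.card (f x), map_zero' := ?_, map_add' := ?_ }, ?_, ?_⟩
    · simpa using key 0 0 (by simp) (by simp)
    · intro a b
      have h1 : ∀ c ∈ f a + f b, c ∈ Atom M := by
        intro c hc
        rcases Multiset.mem_add.1 hc with h | h
        exacts [hf a c h, hf b c h]
      have h2 : (f a + f b).sum = a + b := by simp [hsum]
      simpa using key (a + b) (f a + f b) h1 h2
    · intro x hx
      have : f x = 0 := Multiset.card_eq_zero.1 hx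
      rw [← hsum x, this, Multiset.sum_zero]
    · intro a ha
      have h := key a {a} (by simpa using ha) (by simp)
      simpa using h
  · rintro ⟨ν, hν0, hν1⟩
    have card_eq : ∀ s : Multiset M, (∀ a ∈ s, a ∈ Atom M) → ν s.sum = Multiset.card s := by
      intro s hs
      induction s using Multiset.induction with
      | empty => simp
      | cons a s ih =>
        rw [Multiset.sum_cons, map_add, hν1 a (hs a (Multiset.mem_cons_self a s)),
          ih (fun b hb => hs b (Multiset.mem_cons_of_mem hb))]
        simp [add_comm]
    have atomic : ∀ n x, ν x = n → ∃ s : Multiset M, (∀ a ∈ s, a ∈ Atom M) ∧ s.sum = x := by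
      intro n
      induction n using Nat.strong_induction_on with
      | _ n ih =>
        intro x hn
        by_cases hx0 : x = 0
        · exact ⟨0, by simp, by simp [hx0]⟩
        by_cases hxa : x ∈ Atom M
        · exact ⟨{x}, by simpa using hxa, by simp⟩
        · have : ∃ y z : M, x = y + z ∧ y ≠ 0 ∧ z ≠ 0 := by
            by_contra h
            push_neg at h
            exact hxa ⟨hx0, fun y z hyz => by
              by_cases hy : y = 0
              · exact Or.inl hy
              · exact Or.inr (h y z hyz hy)⟩
          obtain ⟨y, z, hxyz, hy, hz⟩ := this
          have hy1 : 1 ≤ ν y := Nat.one_le_iff_ne_zero.2 (fun h => hy (hν0 y h))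
          have hz1 : 1 ≤ ν z := Nat.one_le_iff_ne_zero.2 (fun h => hz (hν0 z h))
          have hsum' : ν y + ν z = n := by rw [← map_add, ← hxyz, hn]
          have hylt : ν y < n := by omega
          have hzlt : ν z < n := by omega
          obtain ⟨s, hs, hss⟩ := ih (ν y) hylt y rfl
          obtain ⟨t, ht, hts⟩ := ih (ν z) hzlt z rfl
          refine ⟨s + t, ?_, by rw [Multiset.sum_add, hss, hts, hxyz]⟩
          intro a ha
          rcases Multiset.mem_add.1 ha with h | h
          exacts [hs a h, ht a h]
    refine ⟨fun x => atomic (ν x) x rfl, fun x s t hs ht hsx htx => ?_⟩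
    rw [← card_eq s hs, ← card_eq t ht, hsx, htx]
end

section
/- Let M be a commutative additive monoid and A ⊆ M a subset such that M is free on A, i.e. the canonical additive map (A →₀ ℕ) →+ M, sending a finitely supported function c to ∑_{a ∈ A} c(a) • a, is bijective. Then A equals the set of atoms of M. -/
lemma freeOnMap_single (M : Type*) [AddCommMonoid M] (A : Set M) (a : A) (n : ℕ) :
    freeOnMap M A (Finsupp.single a n) = n • (a : M) := by
  simp [freeOnMap]

/-- If a commutative additive monoid `M` is free on a subset `A`, then `A` is exactly the
set of atoms of `M`. -/
theorem basis_eq_atoms_of_free (M : Type*) [AddCommMonoid M] (A : Set M)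
    (hfree : IsFreeOn M A) : A = Atom M := by
  obtain ⟨hinj, hsurj⟩ := hfree
  ext x
  constructor
  · intro hx
    set a : A := ⟨x, hx⟩ with ha_def
    refine ⟨?_, ?_⟩
    · intro h0
      have h : freeOnMap M A (Finsupp.single a 1) = freeOnMap M A 0 := by
        simp [freeOnMap_single, h0, ha_def]
      simpa using hinj h
    · intro y z hyz
      obtain ⟨c, hc⟩ := hsurj y
      obtain ⟨d, hd⟩ := hsurj z
      have h : freeOnMap M A (Finsupp.single a 1) = freeOnMap M A (c + d) := by
        rw [map_add, hc, hd, freeOnMap_single, one_smul]; exact hyz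
      have h2 : Finsupp.single a 1 = c + d := hinj h
      have hb : ∀ b : A, b ≠ a → c b = 0 ∧ d b = 0 := by
        intro b hb
        have := congrArg (fun f : A →₀ ℕ => f b) h2
        simp [Finsupp.single_eq_of_ne' (Ne.symm hb)] at this
        omega
      have hca : c a + d a = 1 := by
        have := congrArg (fun f : A →₀ ℕ => f a) h2
        simpa using this.symm
      rcases Nat.le_one_iff_eq_zero_or_eq_one.1 (by omega : c a ≤ 1) with h0 | h1
      · left
        have : c = 0 := by
          ext b
          by_cases hba : b = a
          · subst hba; simpa using h0
          · simpa using (hb b hba).1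
        rw [← hc, this, map_zero]
      · right
        have : d = 0 := by
          ext b
          by_cases hba : b = a
          · subst hba; simp; omega
          · simpa using (hb b hba).2
        rw [← hd, this, map_zero]
  · rintro ⟨hx0, hatom⟩
    obtain ⟨c, hc⟩ := hsurj x
    have hc0 : c ≠ 0 := by rintro rfl; simp at hc; exact hx0 hc.symm
    obtain ⟨a, ha⟩ := Finsupp.support_nonempty_iff.2 hc0
    have hca : 1 ≤ c a := Nat.one_le_iff_ne_zero.2 (Finsupp.mem_support_iff.1 ha)
    set c' : A →₀ ℕ := c.erase a + Finsupp.single a (c a - 1) with hc'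
    have hdecomp : c = Finsupp.single a 1 + c' := by
      ext b
      by_cases hba : b = a
      · subst hba; simp [hc']; omega
      · simp [hc', Finsupp.single_eq_of_ne' (Ne.symm hba), Finsupp.erase_ne hba]
    have hxa : x = (a : M) + freeOnMap M A c' := by
      rw [← hc, hdecomp, map_add, freeOnMap_single, one_smul]
    rcases hatom _ _ hxa with h | h
    · exfalso
      have hh : freeOnMap M A (Finsupp.single a 1) = freeOnMap M A 0 := by
        simp [freeOnMap_single, h]
      simpa using hinj hh
    · have hz : c' = 0 := hinj (by simp [h])
      have : x = (a : M) := by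
        rw [← hc, hdecomp, hz, add_zero, freeOnMap_single, one_smul]
      rw [this]; exact a.2
end

section
/- Fix n : ℕ and let w be a permutation of Fin (n+1) which is 231-avoiding. Then the number of Bruhat inversions of w equals the cardinality of the support set of w: the cardinality of {(i, j) : Fin (n+1) × Fin (n+1) | i < j ∧ w⁻¹ j < w⁻¹ i ∧ ¬∃ l, i < l ∧ l < j ∧ w⁻¹ j < w⁻¹ l ∧ w⁻¹ l < w⁻¹ i} equals the cardinality of {i : Fin (n+1) | ∃ p ≤ i, i < w p}. -/
section
variable {n : ℕ} (w : Equiv.Perm (Fin (n + 1)))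

private lemma aux_support_of_inv {i j : Fin (n + 1)} (hij : i < j) (hinv : w⁻¹ j < w⁻¹ i) :
    ∃ p ≤ i, i < w p := by
  by_cases h : w⁻¹ j ≤ i
  · exact ⟨w⁻¹ j, h, by simpa using hij⟩
  · push_neg at h
    by_contra hc
    push_neg at hc
    have hsub : (Finset.Iic i).image w ⊆ Finset.Iic i := by
      intro x hx
      simp only [Finset.mem_image, Finset.mem_Iic] at hx ⊢
      obtain ⟨p, hp, rfl⟩ := hx
      exact hc p hp
    have heq : (Finset.Iic i).image w = Finset.Iic i :=
      Finset.eq_of_subset_of_card_le hsub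
        (by rw [Finset.card_image_of_injective _ w.injective])
    have hmem : i ∈ (Finset.Iic i).image w := by
      rw [heq]; exact Finset.mem_Iic.mpr le_rfl
    simp only [Finset.mem_image, Finset.mem_Iic] at hmem
    obtain ⟨p, hp, hwp⟩ := hmem
    have hip : w⁻¹ i = p := by rw [← hwp]; simp
    have : i < w⁻¹ i := h.trans hinv
    rw [hip] at this
    exact absurd hp (not_le.mpr this)

private lemma aux_exists_inv
    (havoid : ¬∃ i l j : Fin (n + 1), i < l ∧ l < j ∧ w⁻¹ l < w⁻¹ j ∧ w⁻¹ j < w⁻¹ i)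
    {i : Fin (n + 1)} (hi : ∃ p ≤ i, i < w p) :
    ∃ j, i < j ∧ w⁻¹ j < w⁻¹ i := by
  obtain ⟨p, hpi, hwp⟩ := hi
  by_contra hc
  push_neg at hc
  have hq : ∀ c, i < c → w⁻¹ i < w⁻¹ c := by
    intro c hic
    refine lt_of_le_of_ne (hc c hic) fun he => hic.ne ?_
    exact w⁻¹.injective he
  have key : ∀ a ≤ i, ∀ c, i < c → w⁻¹ a < w⁻¹ c := by
    intro a ha c hic
    rcases eq_or_lt_of_le ha with rfl | hai
    · exact hq c hic
    · rcases lt_trichotomy (w⁻¹ a) (w⁻¹ c) with h | h | h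
      · exact h
      · exact absurd (w⁻¹.injective h) (hai.trans hic).ne
      · exact absurd ⟨a, i, c, hai, hic, hq c hic, h⟩ havoid
  have hsub : (Finset.Iic i).image (fun a => w⁻¹ a) ⊆ Finset.Iio p := by
    intro x hx
    simp only [Finset.mem_image, Finset.mem_Iic, Finset.mem_Iio] at hx ⊢
    obtain ⟨a, ha, rfl⟩ := hx
    have := key a ha (w p) hwp
    simpa using this
  have h1 := Finset.card_le_card hsub
  rw [Finset.card_image_of_injective _ w⁻¹.injective, Fin.card_Iic, Fin.card_Iio] at h1
  have : (p : ℕ) ≤ (i : ℕ) := hpi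
  omega

private lemma aux_bruhat {i : Fin (n + 1)} (h : ∃ j, i < j ∧ w⁻¹ j < w⁻¹ i) :
    ∃ j, i < j ∧ w⁻¹ j < w⁻¹ i ∧
      ¬∃ l, i < l ∧ l < j ∧ w⁻¹ j < w⁻¹ l ∧ w⁻¹ l < w⁻¹ i := by
  classical
  set s : Finset (Fin (n + 1)) :=
    Finset.univ.filter (fun j => i < j ∧ w⁻¹ j < w⁻¹ i) with hs
  obtain ⟨j0, hj0⟩ := h
  have hne : s.Nonempty := ⟨j0, by simp only [hs, Finset.mem_filter, Finset.mem_univ, true_and]; exact hj0⟩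
  obtain ⟨j, hj, hmax⟩ := Finset.exists_max_image s (fun j => w⁻¹ j) hne
  simp only [hs, Finset.mem_filter, Finset.mem_univ, true_and] at hj
  refine ⟨j, hj.1, hj.2, ?_⟩
  rintro ⟨l, hil, hlj, hjl, hli⟩
  have hls : l ∈ s := by simp only [hs, Finset.mem_filter, Finset.mem_univ, true_and]; exact ⟨hil, hli⟩
  exact absurd (hmax l hls) (not_le.mpr hjl)

end

/-- For a 231-avoiding permutation `w` of `Fin (n+1)`, the number of Bruhat inversions of `w`
equals the cardinality of the support set of `w`. -/
theorem card_bruhatInversions_eq_card_support (n : ℕ) (w : Equiv.Perm (Fin (n + 1)))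
    (havoid : ¬∃ i l j : Fin (n + 1), i < l ∧ l < j ∧ w⁻¹ l < w⁻¹ j ∧ w⁻¹ j < w⁻¹ i) :
    Nat.card {p : Fin (n + 1) × Fin (n + 1) |
        p.1 < p.2 ∧ w⁻¹ p.2 < w⁻¹ p.1 ∧
          ¬∃ l : Fin (n + 1), p.1 < l ∧ l < p.2 ∧ w⁻¹ p.2 < w⁻¹ l ∧ w⁻¹ l < w⁻¹ p.1} =
      Nat.card {i : Fin (n + 1) | ∃ p ≤ i, i < w p} := by
  have hbij : Set.BijOn Prod.fst
      {p : Fin (n + 1) × Fin (n + 1) |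
        p.1 < p.2 ∧ w⁻¹ p.2 < w⁻¹ p.1 ∧
          ¬∃ l : Fin (n + 1), p.1 < l ∧ l < p.2 ∧ w⁻¹ p.2 < w⁻¹ l ∧ w⁻¹ l < w⁻¹ p.1}
      {i : Fin (n + 1) | ∃ p ≤ i, i < w p} := by
    refine ⟨?_, ?_, ?_⟩
    · rintro ⟨i, j⟩ ⟨hij, hinv, -⟩
      exact aux_support_of_inv w hij hinv
    · rintro ⟨i, j1⟩ ⟨hij1, hinv1, hbr1⟩ ⟨i', j2⟩ ⟨hij2, hinv2, hbr2⟩ hfst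
      simp only [Prod.fst] at hfst
      subst hfst
      simp only [Set.mem_setOf_eq] at *
      have hj : j1 = j2 := by
        rcases lt_trichotomy j1 j2 with h | h | h
        · rcases lt_trichotomy (w⁻¹ j1) (w⁻¹ j2) with h2 | h2 | h2
          · exact absurd ⟨i, j1, j2, hij1, h, h2, hinv2⟩ havoid
          · exact w⁻¹.injective h2
          · exact absurd ⟨j1, hij1, h, h2, hinv1⟩ hbr2
        · exact h
        · rcases lt_trichotomy (w⁻¹ j2) (w⁻¹ j1) with h2 | h2 | h2
          · exact absurd ⟨i, j2, j1, hij2, h, h2, hinv1⟩ havoid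
          · exact (w⁻¹.injective h2).symm
          · exact absurd ⟨j2, hij2, h, h2, hinv2⟩ hbr1
      rw [hj]
    · rintro i hi
      obtain ⟨j, h1, h2, h3⟩ := aux_bruhat w (aux_exists_inv w havoid hi)
      exact ⟨(i, j), ⟨h1, h2, h3⟩, rfl⟩
  exact Nat.card_congr (hbij.equiv _)
end

section
/- Fix n : ℕ and let w be a 231-avoiding permutation of Fin (n+1). If (i, j₁) and (i, j₂) are both Bruhat inversions of w (with the same smaller entry i), then j₁ = j₂. In other words, the map sending a Bruhat inversion (i, j) to its smaller entry i is injective. -/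
lemma bruhat_aux (n : ℕ) (w : Equiv.Perm (Fin (n + 1)))
    (havoid : ¬∃ i l j : Fin (n + 1), i < l ∧ l < j ∧ w⁻¹ l < w⁻¹ j ∧ w⁻¹ j < w⁻¹ i)
    (i j₁ j₂ : Fin (n + 1))
    (h₁ : i < j₁ ∧ w⁻¹ j₁ < w⁻¹ i ∧
      ¬∃ l : Fin (n + 1), i < l ∧ l < j₁ ∧ w⁻¹ j₁ < w⁻¹ l ∧ w⁻¹ l < w⁻¹ i)
    (h₂ : i < j₂ ∧ w⁻¹ j₂ < w⁻¹ i ∧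
      ¬∃ l : Fin (n + 1), i < l ∧ l < j₂ ∧ w⁻¹ j₂ < w⁻¹ l ∧ w⁻¹ l < w⁻¹ i)
    (hlt : j₁ < j₂) : False := by
  obtain ⟨hi1, hw1, _⟩ := h₁
  obtain ⟨hi2, hw2, hnl2⟩ := h₂
  rcases lt_trichotomy (w⁻¹ j₁) (w⁻¹ j₂) with h | h | h
  · exact havoid ⟨i, j₁, j₂, hi1, hlt, h, hw2⟩
  · exact absurd (w⁻¹.injective h) (ne_of_lt hlt)
  · exact hnl2 ⟨j₁, hi1, hlt, h, hw1⟩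

/-- For a 231-avoiding permutation `w` of `Fin (n+1)`, two Bruhat inversions with the same
smaller entry coincide: the map sending a Bruhat inversion `(i, j)` to `i` is injective. -/
theorem bruhatInversion_injective_on_smaller_entry (n : ℕ) (w : Equiv.Perm (Fin (n + 1)))
    (havoid : ¬∃ i l j : Fin (n + 1), i < l ∧ l < j ∧ w⁻¹ l < w⁻¹ j ∧ w⁻¹ j < w⁻¹ i)
    (i j₁ j₂ : Fin (n + 1))
    (h₁ : i < j₁ ∧ w⁻¹ j₁ < w⁻¹ i ∧
      ¬∃ l : Fin (n + 1), i < l ∧ l < j₁ ∧ w⁻¹ j₁ < w⁻¹ l ∧ w⁻¹ l < w⁻¹ i)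
    (h₂ : i < j₂ ∧ w⁻¹ j₂ < w⁻¹ i ∧
      ¬∃ l : Fin (n + 1), i < l ∧ l < j₂ ∧ w⁻¹ j₂ < w⁻¹ l ∧ w⁻¹ l < w⁻¹ i) :
    j₁ = j₂ := by
  rcases lt_trichotomy j₁ j₂ with h | h | h
  · exact absurd (bruhat_aux n w havoid i j₁ j₂ h₁ h₂ h) id
  · exact h
  · exact absurd (bruhat_aux n w havoid i j₂ j₁ h₂ h₁ h) id
end

section
/- Fix n : ℕ and let w be a 231-avoiding permutation of Fin (n+1). If i belongs to the support set of w, i.e. there exists p ≤ i with i < w p, then there exists j with i < j such that (i, j) is a Bruhat inversion of w. In other words, the map sending a Bruhat inversion (i, j) to its smaller entry i hits every element of the support set. -/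
/-- For a 231-avoiding permutation `w` of `Fin (n+1)`, every element `i` of the support set
of `w` is the smaller entry of some Bruhat inversion `(i, j)` of `w`. -/
theorem exists_bruhatInversion_of_mem_support (n : ℕ) (w : Equiv.Perm (Fin (n + 1)))
    (havoid : ¬∃ i l j : Fin (n + 1), i < l ∧ l < j ∧ w⁻¹ l < w⁻¹ j ∧ w⁻¹ j < w⁻¹ i)
    (i : Fin (n + 1)) (hi : ∃ p ≤ i, i < w p) :
    ∃ j : Fin (n + 1), i < j ∧ w⁻¹ j < w⁻¹ i ∧
      ¬∃ l : Fin (n + 1), i < l ∧ l < j ∧ w⁻¹ j < w⁻¹ l ∧ w⁻¹ l < w⁻¹ i := by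
  classical
  obtain ⟨p, hp, hwp⟩ := hi
  by_cases hS : ∃ j, i < j ∧ w⁻¹ j < w⁻¹ i
  · set S := Finset.univ.filter (fun j : Fin (n + 1) => i < j ∧ w⁻¹ j < w⁻¹ i) with hSdef
    have hne : S.Nonempty := by
      obtain ⟨j, hj1, hj2⟩ := hS
      exact ⟨j, by simpa [hSdef, hj1] using hj2⟩
    obtain ⟨j, hjS, hmax⟩ := S.exists_max_image (fun j => w⁻¹ j) hne
    simp only [hSdef, Finset.mem_filter, Finset.mem_univ, true_and] at hjS
    refine ⟨j, hjS.1, hjS.2, ?_⟩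
    rintro ⟨l, hil, hlj, hjl, hli⟩
    have : w⁻¹ l ≤ w⁻¹ j := hmax l (by
      simp only [hSdef, Finset.mem_filter, Finset.mem_univ, true_and]
      exact ⟨hil, hli⟩)
    exact absurd hjl (not_lt.mpr this)
  · exfalso
    push_neg at hS
    have hq : w⁻¹ (w p) = p := w.symm_apply_apply p
    have hqi : w⁻¹ i < p := by
      have h1 : w⁻¹ i ≤ w⁻¹ (w p) := hS (w p) hwp
      rw [hq] at h1
      rcases lt_or_eq_of_le h1 with h | h
      · exact h
      · exfalso
        have : i = w p := by
          have := congrArg w h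
          simpa using this
        exact absurd (this ▸ hwp) (lt_irrefl (w p))
    have ha : ∃ a : Fin (n + 1), a ≤ i ∧ i < w⁻¹ a := by
      by_contra h
      push_neg at h
      set A := Finset.univ.filter (fun a : Fin (n + 1) => a ≤ i) with hAdef
      have himg : A.image (fun a => w⁻¹ a) = A := by
        apply Finset.eq_of_subset_of_card_le
        · intro x hx
          simp only [hAdef, Finset.mem_image, Finset.mem_filter, Finset.mem_univ,
            true_and] at hx ⊢
          obtain ⟨a, haa, rfl⟩ := hx
          exact h a haa
        · rw [Finset.card_image_of_injective _ (Equiv.injective _)]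
      have hpA : p ∈ A := by simp [hAdef, hp]
      rw [← himg] at hpA
      simp only [hAdef, Finset.mem_image, Finset.mem_filter, Finset.mem_univ, true_and] at hpA
      obtain ⟨a, haa, hap⟩ := hpA
      have haw : a = w p := by
        have := congrArg w hap
        simpa using this
      rw [haw] at haa
      exact absurd hwp (not_lt.mpr haa)
    obtain ⟨a, hai, hia⟩ := ha
    have hai' : a < i := by
      rcases lt_or_eq_of_le hai with h | h
      · exact h
      · exfalso
        rw [h] at hia
        exact absurd (hqi.trans_le hp) (not_lt.mpr hia.le)
    exact havoid ⟨a, i, w p, hai', hwp, by rwa [hq], by rw [hq]; exact hp.trans_lt hia⟩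
end

section
/- Let C be a category with zero morphisms which has cokernels and pushouts, and in which monomorphisms are stable under pushout (the pushout of a monomorphism along any morphism is again a monomorphism). Let f : A ⟶ B and g : B ⟶ C be morphisms such that g is both a monomorphism and an epimorphism, and such that the composite f ≫ g is an epimorphism. Then f is an epimorphism. -/
open CategoryTheory CategoryTheory.Limits

/-- In a category with zero morphisms, cokernels and pushouts, in which monomorphisms are
stable under pushout, if `g` is both a monomorphism and an epimorphism and `f ≫ g` is an
epimorphism, then `f` is an epimorphism. -/
theorem epi_of_regular_comp_epi {C : Type*} [Category C] [HasZeroMorphisms C]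
    [HasCokernels C] [HasPushouts C]
    [(MorphismProperty.monomorphisms C).IsStableUnderCobaseChange]
    {A B D : C} (f : A ⟶ B) (g : B ⟶ D) [Mono g] [Epi g] [Epi (f ≫ g)] :
    Epi f := by
  -- Let Q be the pushout of f with itself.
  set i₁ : B ⟶ pushout f f := pushout.inl f f with hi₁
  set i₂ : B ⟶ pushout f f := pushout.inr f f with hi₂
  -- Push out g along i₁.
  set k₁ : pushout f f ⟶ pushout g i₁ := pushout.inr g i₁ with hk₁
  set j₁ : D ⟶ pushout g i₁ := pushout.inl g i₁ with hj₁
  -- Push out g along i₂ ≫ k₁.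
  set k₂ : pushout g i₁ ⟶ pushout g (i₂ ≫ k₁) := pushout.inr g (i₂ ≫ k₁) with hk₂
  set j₂ : D ⟶ pushout g (i₂ ≫ k₁) := pushout.inl g (i₂ ≫ k₁) with hj₂
  have hmono₁ : Mono k₁ :=
    MorphismProperty.pushout_inr (P := MorphismProperty.monomorphisms C) g i₁
      (inferInstance : Mono g)
  have hmono₂ : Mono k₂ :=
    MorphismProperty.pushout_inr (P := MorphismProperty.monomorphisms C) g (i₂ ≫ k₁)
      (inferInstance : Mono g)
  have hc₁ : g ≫ j₁ = i₁ ≫ k₁ := pushout.condition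
  have hc₂ : g ≫ j₂ = i₂ ≫ k₁ ≫ k₂ := by
    simpa using (pushout.condition : g ≫ j₂ = (i₂ ≫ k₁) ≫ k₂)
  have hff : f ≫ i₁ = f ≫ i₂ := pushout.condition
  have key : (f ≫ g) ≫ j₁ ≫ k₂ = (f ≫ g) ≫ j₂ := by
    calc (f ≫ g) ≫ j₁ ≫ k₂ = f ≫ (g ≫ j₁) ≫ k₂ := by simp
      _ = (f ≫ i₁) ≫ k₁ ≫ k₂ := by rw [hc₁]; simp
      _ = (f ≫ i₂) ≫ k₁ ≫ k₂ := by rw [hff]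
      _ = (f ≫ g) ≫ j₂ := by simp only [Category.assoc]; rw [← hc₂]
  have hj : j₁ ≫ k₂ = j₂ := (cancel_epi (f ≫ g)).mp key
  have hQ : i₁ ≫ k₁ ≫ k₂ = i₂ ≫ k₁ ≫ k₂ := by
    rw [← Category.assoc, ← hc₁, Category.assoc, hj, hc₂]
  have hi : i₁ = i₂ := by
    have : Mono (k₁ ≫ k₂) := mono_comp _ _
    exact (cancel_mono (k₁ ≫ k₂)).mp hQ
  constructor
  intro Z u v huv
  calc u = i₁ ≫ pushout.desc u v huv := by rw [hi₁]; exact (pushout.inl_desc _ _ _).symm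
    _ = i₂ ≫ pushout.desc u v huv := by rw [hi]
    _ = v := by rw [hi₂]; exact pushout.inr_desc _ _ _
end
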